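/- Let n ≥ 4. Consider n random lengths drawn independently and uniformly from [0,1], with increasing rearrangement X_(1) ≤ ⋯ ≤ X_(n). Then the probability that X_(i) + ⋯ + X_(i+n−3) < X_(i+n−2) for both i = 1 and i = 2 (i.e., that no (n−1)-gon can be formed) equals 1 / ( (2n−5) · 2^{n−3} · (n−3)! ). -/

import Mathlib

open MeasureTheory Finset ENNReal

/-- `T k ℓ` : the `(k-1)`-bonacci sequence with initial terms
`T k ℓ 1 = ⋯ = T k ℓ (ℓ-1) = 0`, `T k ℓ ℓ = ⋯ = T k ℓ (k-1) = 1` and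
recurrence `T k ℓ m = ∑_{p=1}^{k-1} T k ℓ (m-p)` for `m ≥ k`. -/
def T (k ℓ : ℕ) : ℕ → ℕ
  | m =>
    if m < k then (if ℓ ≤ m then 1 else 0)
    else if h0 : m = 0 then 0
    else ∑ p ∈ (Finset.range (k - 1)).attach, T k ℓ (m - (↑p + 1))
  termination_by m => m
  decreasing_by omega

/-- `S k` : the `(k-1)`-bonacci sequence with `S k 1 = 1`, `S k i = 2^(i-2)` for
`2 ≤ i ≤ k-1`, and recurrence `S k m = ∑_{p=1}^{k-1} S k (m-p)` for `m ≥ k`. -/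
def S (k : ℕ) : ℕ → ℕ
  | m =>
    if h0 : m = 0 then 0
    else if m = 1 then 1
    else if m < k then 2 ^ (m - 2)
    else ∑ p ∈ (Finset.range (k - 1)).attach, S k (m - (↑p + 1))
  termination_by m => m
  decreasing_by omega

/-- No `k`-gon can be formed from the (increasingly sorted) stick lengths `y`:
for every window of `k` consecutive entries, i.e. every (0-indexed) `i` with
`i + (k-1) < n`, one has `y i + ⋯ + y (i+k-2) < y (i+k-1)`. -/
def NoPolygon (n k : ℕ) (y : Fin n → ℝ) : Prop :=
  ∀ i : ℕ, ∀ hi : i + (k - 1) < n,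
    (∑ j : Fin (k - 1), y ⟨i + j, by have := j.isLt; omega⟩) < y ⟨i + (k - 1), hi⟩

section PickupSticksAux

private lemma hyp_null (n : ℕ) (i j : Fin n) (h : i ≠ j) :
    volume {x : Fin n → ℝ | x i = x j} = 0 := by
  have : {x : Fin n → ℝ | x i = x j}
      = (LinearMap.ker ((LinearMap.proj i : (Fin n → ℝ) →ₗ[ℝ] ℝ) - LinearMap.proj j) : Set (Fin n → ℝ)) := by
    ext x; simp [LinearMap.mem_ker, sub_eq_zero]
  rw [this]
  apply Measure.addHaar_submodule
  intro htop
  have h1 : (Pi.single i 1 : Fin n → ℝ) ∈ LinearMap.ker ((LinearMap.proj i : (Fin n → ℝ) →ₗ[ℝ] ℝ) - LinearMap.proj j) := htop ▸ trivial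
  simp [LinearMap.mem_ker, Pi.single_apply, h, h.symm] at h1

private lemma noninj_null (n : ℕ) :
    volume {x : Fin n → ℝ | ¬ Function.Injective x} = 0 := by
  have hsub : {x : Fin n → ℝ | ¬ Function.Injective x}
      ⊆ ⋃ (p : Fin n × Fin n) (_ : p.1 ≠ p.2), {x : Fin n → ℝ | x p.1 = x p.2} := by
    intro x hx
    simp only [Set.mem_setOf_eq, Function.Injective, not_forall] at hx
    obtain ⟨i, j, hij, hne⟩ := hx
    exact Set.mem_iUnion.2 ⟨(i, j), Set.mem_iUnion.2 ⟨hne, hij⟩⟩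
  refine measure_mono_null hsub ?_
  refine measure_iUnion_null fun p => ?_
  by_cases h : p.1 = p.2
  · simp [h]
  · simpa [h] using hyp_null n p.1 p.2 h

private lemma perm_mp (n : ℕ) (σ : Equiv.Perm (Fin n)) :
    MeasurePreserving (fun x : Fin n → ℝ => x ∘ σ) volume volume := by
  have h := MeasureTheory.volume_measurePreserving_piCongrLeft (fun _ : Fin n => ℝ) σ.symm
  have heq : (MeasurableEquiv.piCongrLeft (fun _ : Fin n => ℝ) σ.symm : (Fin n → ℝ) → (Fin n → ℝ))
      = fun x => x ∘ σ := by
    ext x i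
    rw [MeasurableEquiv.coe_piCongrLeft]
    have := Equiv.piCongrLeft_apply_apply (fun _ : Fin n => ℝ) σ.symm x (σ.symm i)
    simp [Equiv.piCongrLeft_apply_eq_cast]
  rwa [heq] at h

private lemma strictMono_sort_eq (n : ℕ) (x : Fin n → ℝ) (σ : Equiv.Perm (Fin n))
    (h : StrictMono (x ∘ σ)) : σ = Tuple.sort x := by
  rw [Tuple.eq_sort_iff]
  refine ⟨h.monotone, fun i j hij heq => ?_⟩
  exact absurd heq (ne_of_lt (h hij))

/-- chamber decomposition -/
private lemma chamber_decomp (n : ℕ) (A : Set (Fin n → ℝ))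
    (hInv : ∀ σ : Equiv.Perm (Fin n), (fun x : Fin n → ℝ => x ∘ σ) ⁻¹' A = A)
    (hMeas : MeasurableSet (A ∩ {y : Fin n → ℝ | StrictMono y})) :
    volume A = (n.factorial : ℝ≥0∞) * volume (A ∩ {y : Fin n → ℝ | StrictMono y}) := by
  set MS := {y : Fin n → ℝ | StrictMono y} with hMS
  set B := A ∩ MS with hB
  -- the chambers
  have hpre : ∀ σ : Equiv.Perm (Fin n),
      (fun x : Fin n → ℝ => x ∘ σ) ⁻¹' B = A ∩ {x | StrictMono (x ∘ σ)} := by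
    intro σ
    rw [hB, Set.preimage_inter, hInv]
    rfl
  have hdisj : Pairwise (Function.onFun Disjoint
      (fun σ : Equiv.Perm (Fin n) => (fun x : Fin n → ℝ => x ∘ σ) ⁻¹' B)) := by
    intro σ τ hst
    rw [Function.onFun, Set.disjoint_left]
    intro x hxσ hxτ
    rw [hpre] at hxσ hxτ
    exact hst ((strictMono_sort_eq n x σ hxσ.2).trans (strictMono_sort_eq n x τ hxτ.2).symm)
  have hmeas' : ∀ σ : Equiv.Perm (Fin n),
      MeasurableSet ((fun x : Fin n → ℝ => x ∘ σ) ⁻¹' B) :=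
    fun σ => (perm_mp n σ).measurable hMeas
  have hcover : A \ (⋃ σ : Equiv.Perm (Fin n), (fun x : Fin n → ℝ => x ∘ σ) ⁻¹' B)
      ⊆ {x : Fin n → ℝ | ¬ Function.Injective x} := by
    intro x hx
    simp only [Set.mem_diff, Set.mem_iUnion, not_exists] at hx
    obtain ⟨hxA, hxn⟩ := hx
    intro hinj
    apply hxn (Tuple.sort x)
    rw [hpre]
    refine ⟨hxA, ?_⟩
    exact ((Tuple.monotone_sort x).strictMono_of_injective
      (hinj.comp (Tuple.sort x).injective))
  have hsub : (⋃ σ : Equiv.Perm (Fin n), (fun x : Fin n → ℝ => x ∘ σ) ⁻¹' B) ⊆ A := by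
    intro x hx
    obtain ⟨σ, hσ⟩ := Set.mem_iUnion.1 hx
    rw [hpre] at hσ; exact hσ.1
  have hAeq : volume A = volume (⋃ σ : Equiv.Perm (Fin n), (fun x : Fin n → ℝ => x ∘ σ) ⁻¹' B) := by
    refine le_antisymm ?_ (measure_mono hsub)
    calc volume A ≤ volume ((⋃ σ : Equiv.Perm (Fin n), (fun x : Fin n → ℝ => x ∘ σ) ⁻¹' B)
        ∪ {x : Fin n → ℝ | ¬ Function.Injective x}) := by
          refine measure_mono fun x hx => ?_
          by_cases hm : x ∈ ⋃ σ : Equiv.Perm (Fin n), (fun x : Fin n → ℝ => x ∘ σ) ⁻¹' B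
          · exact Or.inl hm
          · exact Or.inr (hcover ⟨hx, hm⟩)
      _ ≤ volume (⋃ σ : Equiv.Perm (Fin n), (fun x : Fin n → ℝ => x ∘ σ) ⁻¹' B)
          + volume {x : Fin n → ℝ | ¬ Function.Injective x} := measure_union_le _ _
      _ = volume (⋃ σ : Equiv.Perm (Fin n), (fun x : Fin n → ℝ => x ∘ σ) ⁻¹' B) := by
          rw [noninj_null n, add_zero]
  rw [hAeq, measure_iUnion hdisj hmeas']
  have : ∀ σ : Equiv.Perm (Fin n), volume ((fun x : Fin n → ℝ => x ∘ σ) ⁻¹' B) = volume B :=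
    fun σ => (perm_mp n σ).measure_preimage hMeas.nullMeasurableSet
  rw [tsum_congr this, tsum_eq_sum (s := Finset.univ) (by simp), Finset.sum_const]
  rw [nsmul_eq_mul]
  congr 1
  simp [Fintype.card_perm]


private def cc (n i : ℕ) : ℝ := if i = 0 then 2*(n:ℝ)-5 else 2*((n:ℝ)-2-(i:ℝ))

private def ent (n : ℕ) : ℕ → ℕ → ℝ := fun i j =>
  if i = n-1 then (if j = i then 1 else 0)
  else if i = n-2 then (if 1 ≤ j ∧ j < n-1 then 1 else 0)
  else if j = i then cc n i
  else if j < i then (if j = 0 then 1 else 2) else 0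

private def Amat (n : ℕ) : Matrix (Fin n) (Fin n) ℝ := fun i j => ent n i j

private lemma cc_pos (n i : ℕ) (hn : 4 ≤ n) (hi : i ≤ n-3) : 0 < cc n i := by
  unfold cc
  split_ifs with h
  · have : (4:ℝ) ≤ (n:ℝ) := by exact_mod_cast hn
    linarith
  · have h1 : (i:ℝ) ≤ (n:ℝ) - 3 := by
      have : (i:ℕ) + 3 ≤ n := by omega
      have := (Nat.cast_le (α := ℝ)).2 this
      push_cast at this; linarith
    linarith

private lemma Amat_lowerTriangular (n : ℕ) (hn : 4 ≤ n) :
    (Amat n).BlockTriangular OrderDual.toDual := by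
  intro i j hij
  have hij' : (i:ℕ) < (j:ℕ) := hij
  unfold Amat ent
  have hj : (j:ℕ) < n := j.isLt
  split_ifs with h1 h2 h3 h4 h5 h6 <;> first | rfl | omega

private lemma Amat_det (n : ℕ) (hn : 4 ≤ n) :
    (Amat n).det = (((2 * n - 5) * 2 ^ (n - 3) * (n - 3).factorial : ℕ) : ℝ) := by
  rw [Matrix.det_of_lowerTriangular _ (Amat_lowerTriangular n hn)]
  have h1 : ∏ i : Fin n, Amat n i i = ∏ i ∈ range n, ent n i i := by
    rw [← Fin.prod_univ_eq_prod_range (fun i => ent n i i) n]; rfl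
  rw [h1]
  obtain ⟨m, hm⟩ : ∃ m, n = m + 2 := ⟨n - 2, by omega⟩
  subst hm
  rw [prod_range_succ, prod_range_succ]
  have e1 : ent (m+2) (m+1) (m+1) = 1 := by unfold ent; simp
  have e2 : ent (m+2) m m = 1 := by
    unfold ent
    have : ¬ (m = m + 2 - 1) := by omega
    rw [if_neg this, if_pos (by omega), if_pos (by omega)]
  rw [e1, e2, mul_one, mul_one]
  have e3 : ∀ i ∈ range m, ent (m+2) i i = cc (m+2) i := by
    intro i hi
    simp only [mem_range] at hi
    unfold ent
    rw [if_neg (by omega), if_neg (by omega), if_pos rfl]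
  rw [prod_congr rfl e3]
  -- now ∏ i in range m, cc (m+2) i  with m ≥ 2
  obtain ⟨p, hp⟩ : ∃ p, m = p + 1 := ⟨m - 1, by omega⟩
  subst hp
  rw [prod_range_succ']
  have e4 : cc (p+3) 0 = 2*(p+3:ℝ)-5 := by unfold cc; simp
  have e5 : ∀ i ∈ range p, cc (p+3) (i+1) = 2*((p:ℝ)-i) := by
    intro i hi
    unfold cc
    rw [if_neg (by omega)]
    push_cast
    ring_nf
  rw [e4, prod_congr rfl e5]
  have e6 : ∏ i ∈ range p, (2*((p:ℝ)-i)) = 2^p * (p.factorial : ℝ) := by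
    have refl1 := Finset.prod_range_reflect (fun j => 2*((j:ℝ)+1)) p
    have congr1 : ∀ i ∈ range p, (2*((p:ℝ)-i)) = 2*(((p - 1 - i : ℕ):ℝ)+1) := by
      intro i hi
      simp only [mem_range] at hi
      have hcast : ((p - 1 - i : ℕ) : ℝ) = (p:ℝ) - 1 - i := by
        have : p - 1 - i = p - (1 + i) := by omega
        rw [this, Nat.cast_sub (by omega)]
        push_cast; ring
      rw [hcast]; ring
    rw [prod_congr rfl congr1, refl1, prod_mul_distrib, prod_const, card_range]
    congr 1
    have := Finset.prod_range_add_one_eq_factorial p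
    exact_mod_cast congrArg (Nat.cast (R := ℝ)) this
  rw [e6]
  have hc : ((2 * (p+3) - 5 : ℕ) : ℝ) = 2*((p:ℝ)+3)-5 := by
    push_cast [Nat.cast_sub (by omega : 5 ≤ 2 * (p+3))]
    ring
  have h2 : p + 3 - 3 = p := by omega
  rw [h2]
  push_cast [hc]
  ring


private lemma rowA (n : ℕ) (hn : 4 ≤ n) (v : ℕ → ℝ) :
    ∑ j ∈ range n, ent n (n-1) j * v j = v (n-1) := by
  rw [Finset.sum_eq_single (n-1)]
  · unfold ent; simp
  · intro b _ hb
    unfold ent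
    rw [if_pos rfl, if_neg hb, zero_mul]
  · intro h
    exact absurd (mem_range.2 (by omega)) h

private lemma rowB (n : ℕ) (hn : 4 ≤ n) (v : ℕ → ℝ) :
    ∑ j ∈ range n, ent n (n-2) j * v j = ∑ j ∈ Ico 1 (n-1), v j := by
  have hpt : ∀ j ∈ range n, ent n (n-2) j * v j = if j ∈ Ico 1 (n-1) then v j else 0 := by
    intro j _
    unfold ent
    rw [if_neg (by omega), if_pos rfl]
    by_cases h : 1 ≤ j ∧ j < n-1
    · rw [if_pos h, if_pos (mem_Ico.2 h), one_mul]
    · rw [if_neg h, if_neg (fun hc => h (mem_Ico.1 hc)), zero_mul]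
  rw [sum_congr rfl hpt, Finset.sum_ite_mem, Finset.inter_eq_right.2]
  intro j hj
  simp only [mem_Ico] at hj
  exact mem_range.2 (by omega)

private lemma rowC (n : ℕ) (hn : 4 ≤ n) (r : ℕ) (hr : r ≤ n-3) (v : ℕ → ℝ) :
    ∑ j ∈ range n, ent n r j * v j
      = cc n r * v r + ((if 0 < r then v 0 else 0) + 2 * ∑ j ∈ Ico 1 r, v j) := by
  have hpt : ∀ j ∈ range n, ent n r j * v j
      = (if j = r then cc n r * v j else 0)
        + ((if j = 0 ∧ 0 < r then v j else 0) + (if j ∈ Ico 1 r then 2 * v j else 0)) := by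
    intro j _
    unfold ent
    rw [if_neg (by omega), if_neg (by omega)]
    by_cases h1 : j = r
    · subst h1
      rw [if_pos rfl, if_pos rfl, if_neg (by omega),
        if_neg (by simp only [mem_Ico, not_and, not_lt]; omega)]
      ring
    · rw [if_neg h1, if_neg h1]
      by_cases h2 : j < r
      · rw [if_pos h2]
        by_cases h3 : j = 0
        · subst h3
          rw [if_pos rfl, if_pos ⟨rfl, by omega⟩, if_neg (by simp [mem_Ico])]
          ring
        · rw [if_neg h3, if_neg (by simp [h3]), if_pos (mem_Ico.2 ⟨by omega, h2⟩)]
          ring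
      · rw [if_neg h2, if_neg (by omega), if_neg (by simp only [mem_Ico, not_and, not_lt]; omega), zero_mul,
          zero_add, zero_add]
  rw [sum_congr rfl hpt, sum_add_distrib, sum_add_distrib]
  congr 1
  · rw [Finset.sum_eq_single r (fun b _ hb => if_neg hb)
      (fun h => absurd (mem_range.2 (by omega)) h), if_pos rfl]
  congr 1
  · by_cases h : 0 < r
    · simp only [h, and_true]
      rw [Finset.sum_eq_single 0 (fun b _ hb => if_neg hb)
        (fun hc => absurd (mem_range.2 (by omega)) hc), if_pos rfl]
      simp [h]
    · simp [h]
  · rw [Finset.sum_ite_mem, Finset.inter_eq_right.2, mul_sum]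
    intro j hj
    simp only [mem_Ico] at hj
    exact mem_range.2 (by omega)


private def xe (n : ℕ) (x : Fin n → ℝ) (j : ℕ) : ℝ := if h : j < n then x ⟨j, h⟩ else 0

private lemma xe_coe (n : ℕ) (x : Fin n → ℝ) (j : Fin n) : xe n x ↑j = x j := by
  simp [xe, j.isLt]

private lemma mulVec_row (n : ℕ) (x : Fin n → ℝ) (r : ℕ) (hr : r < n) :
    (Amat n).mulVec x ⟨r, hr⟩ = ∑ j ∈ range n, ent n r j * xe n x j := by
  rw [← Fin.sum_univ_eq_sum_range (fun j => ent n r j * xe n x j) n]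
  simp only [Matrix.mulVec, dotProduct]
  exact Finset.sum_congr rfl fun j _ => by rw [xe_coe]; rfl

section MainA
variable {n : ℕ}

/-- window sums -/
private def s1 (n : ℕ) (x : Fin n → ℝ) : ℝ := ∑ j ∈ range (n-2), xe n x j
private def s2 (n : ℕ) (x : Fin n → ℝ) : ℝ := ∑ j ∈ Ico 1 (n-1), xe n x j

private lemma sum_relations (hn : 4 ≤ n) (x : Fin n → ℝ) :
    s1 n x = xe n x 0 + ∑ j ∈ Ico 1 (n-2), xe n x j
    ∧ s2 n x = ∑ j ∈ Ico 1 (n-2), xe n x j + xe n x (n-2)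
    ∧ ∑ j ∈ Ico 1 (n-2), xe n x j = ∑ j ∈ Ico 1 (n-3), xe n x j + xe n x (n-3) := by
  refine ⟨?_, ?_, ?_⟩
  · rw [s1, Finset.range_eq_Ico, Finset.sum_eq_sum_Ico_succ_bot (by omega : 0 < n-2)]
  · rw [s2, show n-1 = (n-2)+1 by omega, Finset.sum_Ico_succ_top (by omega : 1 ≤ n-2)]
  · rw [show n-2 = (n-3)+1 by omega, Finset.sum_Ico_succ_top (by omega : 1 ≤ n-3)]

-- increment identities for y = mulVec
private lemma D0 (hn : 4 ≤ n) (x : Fin n → ℝ) (r : ℕ) (hr : r + 1 ≤ n-3) :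
    (Amat n).mulVec x ⟨r+1, by omega⟩
      = (Amat n).mulVec x ⟨r, by omega⟩ + cc n (r+1) * (xe n x (r+1) - xe n x r) := by
  rw [mulVec_row n x (r+1) (by omega), mulVec_row n x r (by omega),
    rowC n hn (r+1) hr (xe n x), rowC n hn r (by omega) (xe n x)]
  rcases Nat.eq_zero_or_pos r with h0 | h0
  · subst h0
    simp only [if_pos (by omega : 0 < 1), if_neg (lt_irrefl 0)]
    rw [show Ico 1 1 = ∅ from rfl, show Ico 1 0 = ∅ by rfl]
    simp only [sum_empty]
    have c0 : cc n 0 = 2*(n:ℝ)-5 := by simp [cc]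
    have c1 : cc n 1 = 2*((n:ℝ)-2-1) := by simp [cc]
    rw [c0, c1]; ring
  · rw [if_pos h0, if_pos (by omega : 0 < r+1),
      Finset.sum_Ico_succ_top (by omega : 1 ≤ r)]
    have cr : cc n r = 2*((n:ℝ)-2-(r:ℝ)) := by rw [cc, if_neg (by omega)]
    have cr1 : cc n (r+1) = 2*((n:ℝ)-2-((r:ℝ)+1)) := by
      rw [cc, if_neg (by omega)]; push_cast; ring
    rw [cr, cr1]; ring

private lemma D1 (hn : 4 ≤ n) (x : Fin n → ℝ) :
    (Amat n).mulVec x ⟨n-2, by omega⟩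
      = (Amat n).mulVec x ⟨n-3, by omega⟩ + (xe n x (n-2) - s1 n x) := by
  obtain ⟨e1, e2, e3⟩ := sum_relations hn x
  rw [mulVec_row n x (n-2) (by omega), mulVec_row n x (n-3) (by omega),
    rowB n hn (xe n x), rowC n hn (n-3) le_rfl (xe n x), if_pos (by omega : 0 < n-3)]
  have c3 : cc n (n-3) = 2 := by
    rw [cc, if_neg (by omega), Nat.cast_sub (by omega : 3 ≤ n)]
    push_cast; ring
  rw [c3]
  have : s2 n x = ∑ j ∈ Ico 1 (n-1), xe n x j := rfl
  rw [← this, e2, e3, e1, e3]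
  ring

private lemma D2 (hn : 4 ≤ n) (x : Fin n → ℝ) :
    (Amat n).mulVec x ⟨n-1, by omega⟩
      = (Amat n).mulVec x ⟨n-2, by omega⟩ + (xe n x (n-1) - s2 n x) := by
  rw [mulVec_row n x (n-1) (by omega), mulVec_row n x (n-2) (by omega),
    rowA n hn (xe n x), rowB n hn (xe n x)]
  have : s2 n x = ∑ j ∈ Ico 1 (n-1), xe n x j := rfl
  rw [← this]; ring

private lemma Y0 (hn : 4 ≤ n) (x : Fin n → ℝ) :
    (Amat n).mulVec x ⟨0, by omega⟩ = cc n 0 * xe n x 0 := by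
  rw [mulVec_row n x 0 (by omega), rowC n hn 0 (by omega) (xe n x)]
  simp

private lemma Ylast (hn : 4 ≤ n) (x : Fin n → ℝ) :
    (Amat n).mulVec x ⟨n-1, by omega⟩ = xe n x (n-1) := by
  rw [mulVec_row n x (n-1) (by omega), rowA n hn (xe n x)]

end MainA


section MainB
variable {n : ℕ}

private lemma steps_mono (f : Fin n → ℝ)
    (h : ∀ r : ℕ, ∀ hr : r + 1 < n, f ⟨r, by omega⟩ ≤ f ⟨r+1, hr⟩) : Monotone f := by
  have key : ∀ d a : ℕ, ∀ hbn : a + d < n, f ⟨a, by omega⟩ ≤ f ⟨a + d, hbn⟩ := by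
    intro d
    induction d with
    | zero => intro a h; simp
    | succ k ih =>
      intro a hbn
      calc f ⟨a, by omega⟩ ≤ f ⟨a + k, by omega⟩ := ih a (by omega)
        _ ≤ f ⟨a + k + 1, by omega⟩ := h (a+k) (by omega)
        _ = f ⟨a + (k+1), hbn⟩ := by congr 1
  intro a b hab
  have h1 := key (b - a) a (by omega : a + (b - a) < n)
  have e1 : (⟨↑a, by omega⟩ : Fin n) = a := by ext; rfl
  have e2 : (⟨↑a + (↑b - ↑a), by omega⟩ : Fin n) = b := by
    ext; simp; omega
  rwa [e1, e2] at h1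

private lemma steps_strictMono (f : Fin n → ℝ)
    (h : ∀ r : ℕ, ∀ hr : r + 1 < n, f ⟨r, by omega⟩ < f ⟨r+1, hr⟩) : StrictMono f := by
  have key : ∀ d a : ℕ, ∀ hbn : a + d < n, 0 < d → f ⟨a, by omega⟩ < f ⟨a + d, hbn⟩ := by
    intro d
    induction d with
    | zero => omega
    | succ k ih =>
      intro a hbn _
      rcases Nat.eq_zero_or_pos k with h0 | h0
      · subst h0
        have := h a (by omega)
        convert this using 2
      · calc f ⟨a, by omega⟩ < f ⟨a + k, by omega⟩ := ih a (by omega) h0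
          _ < f ⟨a + k + 1, by omega⟩ := h (a+k) (by omega)
          _ = f ⟨a + (k+1), hbn⟩ := by congr 1
  intro a b hab
  have h1 := key (b - a) a (by omega : a + (b - a) < n) (by exact_mod_cast Nat.sub_pos_of_lt hab)
  have e1 : (⟨↑a, by omega⟩ : Fin n) = a := by ext; rfl
  have e2 : (⟨↑a + (↑b - ↑a), by omega⟩ : Fin n) = b := by
    ext; simp
    have : (a:ℕ) < b := hab
    omega
  rwa [e1, e2] at h1

private lemma win_sum (hn : 4 ≤ n) (x : Fin n → ℝ) (i : ℕ) (hi : i + ((n-1)-1) < n) :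
    (∑ j : Fin ((n-1) - 1), x ⟨i + j, by have := j.isLt; omega⟩)
      = ∑ j ∈ range (n-2), xe n x (i + j) := by
  have hnn : (n-1) - 1 = n - 2 := by omega
  have h2 : ∑ j ∈ range (n-2), xe n x (i + j) = ∑ j ∈ range ((n-1)-1), xe n x (i + j) := by
    rw [hnn]
  rw [h2, ← Fin.sum_univ_eq_sum_range (fun j => xe n x (i + j)) ((n-1)-1)]
  refine Finset.sum_congr rfl fun j _ => ?_
  have hlt : i + (j : ℕ) < n := by have := j.isLt; omega
  simp only [xe, dif_pos hlt]

private lemma nopoly_iff (hn : 4 ≤ n) (x : Fin n → ℝ) :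
    NoPolygon n (n-1) x ↔ (s1 n x < xe n x (n-2) ∧ s2 n x < xe n x (n-1)) := by
  have hnn : (n-1) - 1 = n - 2 := by omega
  constructor
  · intro h
    constructor
    · have h0 := h 0 (by omega)
      rw [win_sum hn x 0 (by omega)] at h0
      have e : x ⟨0 + ((n-1)-1), by omega⟩ = xe n x (n-2) := by
        simp only [xe, dif_pos (by omega : n-2 < n)]
        congr 1
        simp only [Fin.mk.injEq]
        omega
      rw [e] at h0
      simpa [s1] using h0
    · have h1 := h 1 (by omega)
      rw [win_sum hn x 1 (by omega)] at h1
      have e : x ⟨1 + ((n-1)-1), by omega⟩ = xe n x (n-1) := by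
        simp only [xe, dif_pos (by omega : n-1 < n)]
        congr 1
        simp only [Fin.mk.injEq]
        omega
      rw [e] at h1
      have e2 : s2 n x = ∑ j ∈ range (n-2), xe n x (1 + j) := by
        rw [s2, Finset.sum_Ico_eq_sum_range, hnn]
      rw [← e2] at h1
      exact h1
  · rintro ⟨c1, c2⟩ i hi
    have hi2 : i = 0 ∨ i = 1 := by omega
    rw [win_sum hn x i hi]
    rcases hi2 with rfl | rfl
    · have e : x ⟨0 + ((n-1)-1), hi⟩ = xe n x (n-2) := by
        simp only [xe, dif_pos (by omega : n-2 < n)]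
        congr 1
        simp only [Fin.mk.injEq]
        omega
      rw [e]
      simpa [s1] using c1
    · have e : x ⟨1 + ((n-1)-1), hi⟩ = xe n x (n-1) := by
        simp only [xe, dif_pos (by omega : n-1 < n)]
        congr 1
        simp only [Fin.mk.injEq]
        omega
      rw [e]
      have e2 : s2 n x = ∑ j ∈ range (n-2), xe n x (1 + j) := by
        rw [s2, Finset.sum_Ico_eq_sum_range, hnn]
      rw [← e2]
      exact c2

end MainB


section MainC
variable {n : ℕ}

private lemma fwd (hn : 4 ≤ n) (x : Fin n → ℝ) (hcube : ∀ i, x i ∈ Set.Icc (0:ℝ) 1)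
    (hsm : StrictMono x) (hc1 : s1 n x < xe n x (n-2)) (hc2 : s2 n x < xe n x (n-1)) :
    Monotone ((Amat n).mulVec x) ∧ ∀ i, (Amat n).mulVec x i ∈ Set.Icc (0:ℝ) 1 := by
  have hmono : Monotone ((Amat n).mulVec x) := by
    refine steps_mono _ (fun r hr => ?_)
    rcases (by omega : r + 1 ≤ n-3 ∨ r + 1 = n-2 ∨ r+1 = n-1) with h | h | h
    · rw [D0 hn x r h]
      have hxle : xe n x r ≤ xe n x (r+1) := by
        simp only [xe, dif_pos (show r < n by omega), dif_pos (show r+1 < n by omega)]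
        exact (hsm (show (⟨r, by omega⟩ : Fin n) < ⟨r+1, by omega⟩ by
          simp [Fin.mk_lt_mk])).le
      nlinarith [cc_pos n (r+1) hn h]
    · have er : r = n-3 := by omega
      have e1 : (⟨r+1, hr⟩ : Fin n) = ⟨n-2, by omega⟩ := by
        simp only [Fin.mk.injEq]; omega
      have e2 : (⟨r, by omega⟩ : Fin n) = ⟨n-3, by omega⟩ := by
        simp only [Fin.mk.injEq]; omega
      rw [e1, e2, D1 hn x]
      linarith
    · have e1 : (⟨r+1, hr⟩ : Fin n) = ⟨n-1, by omega⟩ := by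
        simp only [Fin.mk.injEq]; omega
      have e2 : (⟨r, by omega⟩ : Fin n) = ⟨n-2, by omega⟩ := by
        simp only [Fin.mk.injEq]; omega
      rw [e1, e2, D2 hn x]
      linarith
  refine ⟨hmono, fun i => ?_⟩
  constructor
  · have h0 : (Amat n).mulVec x ⟨0, by omega⟩ ≤ (Amat n).mulVec x i := hmono (by simp [Fin.le_def])
    have : (Amat n).mulVec x ⟨0, by omega⟩ = cc n 0 * xe n x 0 := Y0 hn x
    have hx0 : 0 ≤ xe n x 0 := by
      simp only [xe, dif_pos (show 0 < n by omega)]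
      exact (hcube _).1
    nlinarith [cc_pos n 0 hn (by omega)]
  · have h0 : (Amat n).mulVec x i ≤ (Amat n).mulVec x ⟨n-1, by omega⟩ :=
      hmono (by simp [Fin.le_def]; omega)
    have hl : (Amat n).mulVec x ⟨n-1, by omega⟩ = xe n x (n-1) := Ylast hn x
    have hx1 : xe n x (n-1) ≤ 1 := by
      simp only [xe, dif_pos (show n-1 < n by omega)]
      exact (hcube _).2
    linarith

private lemma bwd (hn : 4 ≤ n) (x : Fin n → ℝ)
    (hsm : StrictMono ((Amat n).mulVec x))
    (hoo : ∀ i, (Amat n).mulVec x i ∈ Set.Ioo (0:ℝ) 1) :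
    (∀ i, x i ∈ Set.Icc (0:ℝ) 1) ∧ StrictMono x
      ∧ s1 n x < xe n x (n-2) ∧ s2 n x < xe n x (n-1) := by
  -- x 0 positive
  have hx0 : 0 < xe n x 0 := by
    have h1 : 0 < cc n 0 * xe n x 0 := by
      rw [← Y0 hn x]; exact (hoo _).1
    rcases mul_pos_iff.1 h1 with ⟨_, h⟩ | ⟨hc, _⟩
    · exact h
    · exact absurd (cc_pos n 0 hn (by omega)) (by linarith)
  -- steps below n-3 are strict
  have hstep : ∀ r : ℕ, r + 1 ≤ n-3 → xe n x r < xe n x (r+1) := by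
    intro r hr
    have h1 : (Amat n).mulVec x ⟨r, by omega⟩ < (Amat n).mulVec x ⟨r+1, by omega⟩ :=
      hsm (by simp [Fin.mk_lt_mk])
    have h2 := D0 hn x r hr
    have h3 : 0 < cc n (r+1) * (xe n x (r+1) - xe n x r) := by linarith
    rcases mul_pos_iff.1 h3 with ⟨_, h⟩ | ⟨hc, _⟩
    · linarith
    · exact absurd (cc_pos n (r+1) hn hr) (by linarith)
  have hpos : ∀ j : ℕ, j ≤ n-3 → 0 < xe n x j := by
    intro j
    induction j with
    | zero => intro _; exact hx0
    | succ k ih => intro hk; exact (ih (by omega)).trans (hstep k hk)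
  -- window gaps
  have hW1 : s1 n x < xe n x (n-2) := by
    have h1 : (Amat n).mulVec x ⟨n-3, by omega⟩ < (Amat n).mulVec x ⟨n-2, by omega⟩ :=
      hsm (by simp [Fin.mk_lt_mk]; omega)
    have h2 := D1 hn x
    linarith
  have hs1nonneg : ∀ j ∈ range (n-2), 0 ≤ xe n x j := by
    intro j hj
    simp only [mem_range] at hj
    exact (hpos j (by omega)).le
  have hxn3le : xe n x (n-3) ≤ s1 n x := Finset.single_le_sum hs1nonneg (mem_range.2 (by omega))
  have hx0le : xe n x 0 ≤ s1 n x := Finset.single_le_sum hs1nonneg (mem_range.2 (by omega))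
  have hxn2pos : 0 < xe n x (n-2) := lt_of_le_of_lt (le_trans hx0.le hx0le) hW1
  have hW2 : s2 n x < xe n x (n-1) := by
    have h1 : (Amat n).mulVec x ⟨n-2, by omega⟩ < (Amat n).mulVec x ⟨n-1, by omega⟩ :=
      hsm (by simp [Fin.mk_lt_mk]; omega)
    have h2 := D2 hn x
    linarith
  have hs2nonneg : ∀ j ∈ Ico 1 (n-1), 0 ≤ xe n x j := by
    intro j hj
    simp only [mem_Ico] at hj
    rcases (by omega : j ≤ n-3 ∨ j = n-2) with h | h
    · exact (hpos j h).le
    · subst h; exact hxn2pos.le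
  have hxn2le : xe n x (n-2) ≤ s2 n x :=
    Finset.single_le_sum hs2nonneg (mem_Ico.2 ⟨by omega, by omega⟩)
  -- strict monotonicity of x
  have hxsm : StrictMono x := by
    refine steps_strictMono _ (fun r hr => ?_)
    have key : xe n x r < xe n x (r+1) := by
      rcases (by omega : r + 1 ≤ n-3 ∨ r + 1 = n-2 ∨ r+1 = n-1) with h | h | h
      · exact hstep r h
      · have : r = n-3 := by omega
        subst this
        rw [(by omega : n-3+1 = n-2)]
        exact lt_of_le_of_lt hxn3le hW1
      · have : r = n-2 := by omega
        subst this
        rw [(by omega : n-2+1 = n-1)]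
        exact lt_of_le_of_lt hxn2le hW2
    simp only [xe, dif_pos (show r < n by omega), dif_pos hr] at key
    exact key
  have hxn1pos : 0 < xe n x (n-1) := lt_of_le_of_lt (le_trans hxn2pos.le hxn2le) hW2
  refine ⟨fun i => ⟨?_, ?_⟩, hxsm, hW1, hW2⟩
  · -- 0 ≤ x i
    have : 0 < xe n x i := by
      rcases (by omega : (i:ℕ) ≤ n-3 ∨ (i:ℕ) = n-2 ∨ (i:ℕ) = n-1) with h | h | h
      · exact hpos i h
      · rw [h]; exact hxn2pos
      · rw [h]; exact hxn1pos
    simp only [xe, dif_pos i.isLt] at this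
    simpa using this.le
  · have h1 : x i ≤ x ⟨n-1, by omega⟩ := hxsm.monotone (by simp [Fin.le_def]; omega)
    have h2 : xe n x (n-1) < 1 := by
      rw [← Ylast hn x]
      exact (hoo _).2
    simp only [xe, dif_pos (show n-1 < n by omega)] at h2
    linarith
end MainC


end PickupSticksAux

theorem pickup_sticks_no_nsub1gon_prob (n : ℕ) (hn : 4 ≤ n) :
    volume {x : Fin n → ℝ | (∀ i, x i ∈ Set.Icc (0 : ℝ) 1) ∧
        NoPolygon n (n - 1) (x ∘ Tuple.sort x)} =
      1 / (((2 * n - 5) * 2 ^ (n - 3) * (n - 3).factorial : ℕ) : ℝ≥0∞) := by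
  set MS := {y : Fin n → ℝ | StrictMono y} with hMS
  set Eset := {x : Fin n → ℝ | (∀ i, x i ∈ Set.Icc (0 : ℝ) 1) ∧
      NoPolygon n (n - 1) (x ∘ Tuple.sort x)} with hEset
  set Qset := {x : Fin n → ℝ | ∀ i, x i ∈ Set.Icc (0 : ℝ) 1} with hQset
  set Kc := {y : Fin n → ℝ | Monotone y ∧ ∀ i, y i ∈ Set.Icc (0:ℝ) 1} with hKc
  set Ko := {y : Fin n → ℝ | StrictMono y ∧ ∀ i, y i ∈ Set.Ioo (0:ℝ) 1} with hKo
  have hxe_meas : ∀ j : ℕ, Measurable fun x : Fin n → ℝ => xe n x j := by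
    intro j
    by_cases h : j < n
    · simp only [xe, dif_pos h]; exact measurable_pi_apply _
    · simp only [xe, dif_neg h]; exact measurable_const
  have hcube_meas : MeasurableSet Qset := by
    have : Qset = ⋂ i : Fin n, (fun x : Fin n → ℝ => x i) ⁻¹' (Set.Icc 0 1) := by
      ext x; simp [hQset]
    rw [this]
    exact MeasurableSet.iInter fun i => (measurable_pi_apply i) measurableSet_Icc
  have hMS_meas : MeasurableSet MS := by
    have : MS = ⋂ p : Fin n × Fin n, {y : Fin n → ℝ | p.1 < p.2 → y p.1 < y p.2} := by
      ext y
      simp only [hMS, Set.mem_setOf_eq, Set.mem_iInter]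
      exact ⟨fun h p hp => h hp, fun h a b hab => h (a, b) hab⟩
    rw [this]
    refine MeasurableSet.iInter fun p => ?_
    by_cases h : p.1 < p.2
    · simp only [h, forall_true_left]
      exact measurableSet_lt (measurable_pi_apply _) (measurable_pi_apply _)
    · simp only [h]; simp
  have hcond_meas : MeasurableSet {x : Fin n → ℝ | s1 n x < xe n x (n-2) ∧ s2 n x < xe n x (n-1)} := by
    refine MeasurableSet.inter ?_ ?_
    · exact measurableSet_lt (Finset.measurable_sum _ fun j _ => hxe_meas j) (hxe_meas (n-2))
    · exact measurableSet_lt (Finset.measurable_sum _ fun j _ => hxe_meas j) (hxe_meas (n-1))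
  -- identification of E ∩ MS
  have hEMS : Eset ∩ MS = Qset ∩ MS ∩ {x : Fin n → ℝ | s1 n x < xe n x (n-2) ∧ s2 n x < xe n x (n-1)} := by
    ext x
    simp only [hEset, hMS, hQset, Set.mem_inter_iff, Set.mem_setOf_eq]
    constructor
    · rintro ⟨⟨hc, hnp⟩, hsm⟩
      have hsort : Tuple.sort x = Equiv.refl _ := Tuple.sort_eq_refl_iff_monotone.2 hsm.monotone
      rw [hsort] at hnp
      simp only [Equiv.coe_refl, Function.comp_id] at hnp
      exact ⟨⟨hc, hsm⟩, (nopoly_iff hn x).1 hnp⟩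
    · rintro ⟨⟨hc, hsm⟩, hcond⟩
      have hsort : Tuple.sort x = Equiv.refl _ := Tuple.sort_eq_refl_iff_monotone.2 hsm.monotone
      refine ⟨⟨hc, ?_⟩, hsm⟩
      rw [hsort]
      simp only [Equiv.coe_refl, Function.comp_id]
      exact (nopoly_iff hn x).2 hcond
  have hEMS_meas : MeasurableSet (Eset ∩ MS) := by
    rw [hEMS]
    exact (hcube_meas.inter hMS_meas).inter hcond_meas
  -- invariance
  have hinvE : ∀ σ : Equiv.Perm (Fin n), (fun x : Fin n → ℝ => x ∘ σ) ⁻¹' Eset = Eset := by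
    intro σ
    ext x
    simp only [hEset, Set.mem_preimage, Set.mem_setOf_eq]
    have h1 : (x ∘ σ) ∘ Tuple.sort (x ∘ σ) = x ∘ Tuple.sort x :=
      Tuple.comp_perm_comp_sort_eq_comp_sort
    rw [h1]
    have h2 : (∀ i, (x ∘ σ) i ∈ Set.Icc (0:ℝ) 1) ↔ ∀ i, x i ∈ Set.Icc (0:ℝ) 1 := by
      constructor
      · intro h i; simpa using h (σ.symm i)
      · intro h i; exact h (σ i)
    rw [h2]
  have hinvQ : ∀ σ : Equiv.Perm (Fin n), (fun x : Fin n → ℝ => x ∘ σ) ⁻¹' Qset = Qset := by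
    intro σ
    ext x
    simp only [hQset, Set.mem_preimage, Set.mem_setOf_eq]
    constructor
    · intro h i; simpa using h (σ.symm i)
    · intro h i; exact h (σ i)
  -- chamber decompositions
  have volE := chamber_decomp n Eset hinvE hEMS_meas
  have volQ := chamber_decomp n Qset hinvQ (hcube_meas.inter hMS_meas)
  have hQ1 : volume Qset = 1 := by
    have : Qset = Set.pi Set.univ (fun _ : Fin n => Set.Icc (0:ℝ) 1) := by
      ext x
      simp only [hQset, Set.mem_setOf_eq, Set.mem_pi, Set.mem_univ, forall_true_left]
    rw [this, volume_pi_pi]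
    simp [Real.volume_Icc]
  -- the linear map
  set Ψ := Matrix.toLin' (Amat n) with hΨ
  have hdet : LinearMap.det Ψ = (((2 * n - 5) * 2 ^ (n - 3) * (n - 3).factorial : ℕ) : ℝ) := by
    rw [hΨ, LinearMap.det_toLin', Amat_det n hn]
  have hDpos : (0:ℝ) < (((2 * n - 5) * 2 ^ (n - 3) * (n - 3).factorial : ℕ) : ℝ) := by
    have h1 : 0 < (2 * n - 5) * 2 ^ (n - 3) * (n - 3).factorial :=
      Nat.mul_pos (Nat.mul_pos (by omega) (pow_pos (by norm_num) _)) (n-3).factorial_pos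
    exact_mod_cast h1
  -- sandwich for E ∩ MS
  have hsub1 : Ψ ⁻¹' Ko ⊆ Eset ∩ MS := by
    intro x hx
    simp only [Set.mem_preimage, hKo, Set.mem_setOf_eq, hΨ, Matrix.toLin'_apply] at hx
    obtain ⟨hcube, hsm, hc1, hc2⟩ := bwd hn x hx.1 hx.2
    rw [hEMS]
    exact ⟨⟨hcube, hsm⟩, hc1, hc2⟩
  have hsub2 : Eset ∩ MS ⊆ Ψ ⁻¹' Kc := by
    intro x hx
    rw [hEMS] at hx
    obtain ⟨⟨hcube, hsm⟩, hc1, hc2⟩ := hx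
    have := fwd hn x hcube hsm hc1 hc2
    simp only [Set.mem_preimage, hKc, Set.mem_setOf_eq, hΨ, Matrix.toLin'_apply]
    exact this
  -- sandwich for Q ∩ MS
  have hKoQ : Ko ⊆ Qset ∩ MS := by
    rintro y ⟨hsm, hIoo⟩
    exact ⟨fun i => ⟨(hIoo i).1.le, (hIoo i).2.le⟩, hsm⟩
  have hQKc : Qset ∩ MS ⊆ Kc := by
    rintro y ⟨hc, hsm⟩
    exact ⟨hsm.monotone, hc⟩
  -- Kc and Ko differ by a null set
  have hKcKo : volume Kc ≤ volume Ko := by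
    have hbad : Kc ⊆ Ko ∪ ({y : Fin n → ℝ | ¬ Function.Injective y}
        ∪ ((⋃ i : Fin n, {y : Fin n → ℝ | y i = 0}) ∪ (⋃ i : Fin n, {y : Fin n → ℝ | y i = 1}))) := by
      intro y hy
      by_cases hinj : Function.Injective y
      · by_cases h0 : ∃ i, y i = 0
        · exact Or.inr (Or.inr (Or.inl (Set.mem_iUnion.2 h0)))
        · by_cases h1 : ∃ i, y i = 1
          · exact Or.inr (Or.inr (Or.inr (Set.mem_iUnion.2 h1)))
          · push_neg at h0 h1
            refine Or.inl ⟨hy.1.strictMono_of_injective hinj, fun i => ?_⟩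
            have := hy.2 i
            exact ⟨lt_of_le_of_ne this.1 (fun hc => h0 i hc.symm),
              lt_of_le_of_ne this.2 (h1 i)⟩
      · exact Or.inr (Or.inl hinj)
    calc volume Kc ≤ volume (Ko ∪ _) := measure_mono hbad
      _ ≤ volume Ko + volume ({y : Fin n → ℝ | ¬ Function.Injective y}
          ∪ ((⋃ i : Fin n, {y : Fin n → ℝ | y i = 0}) ∪ (⋃ i : Fin n, {y : Fin n → ℝ | y i = 1}))) :=
        measure_union_le _ _
      _ = volume Ko := by
        have hz : volume ({y : Fin n → ℝ | ¬ Function.Injective y}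
            ∪ ((⋃ i : Fin n, {y : Fin n → ℝ | y i = 0}) ∪ (⋃ i : Fin n, {y : Fin n → ℝ | y i = 1}))) = 0 := by
          refine measure_union_null (noninj_null n) (measure_union_null ?_ ?_) <;>
          · refine measure_iUnion_null fun i => ?_
            have := MeasureTheory.Measure.pi_hyperplane (fun _ : Fin n => (volume : Measure ℝ)) i
            simp only [MeasureTheory.volume_pi] at *
            first
              | exact this 0
              | exact this 1
        rw [hz, add_zero]
    -- volumes via the linear map
  have hdetne : LinearMap.det Ψ ≠ 0 := by rw [hdet]; exact hDpos.ne'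
  have hpreKo : volume (Ψ ⁻¹' Ko)
      = ENNReal.ofReal ((((2 * n - 5) * 2 ^ (n - 3) * (n - 3).factorial : ℕ) : ℝ))⁻¹ * volume Ko := by
    rw [Measure.addHaar_preimage_linearMap volume hdetne Ko, hdet,
      abs_of_pos (inv_pos.2 hDpos)]
  have hpreKc : volume (Ψ ⁻¹' Kc)
      = ENNReal.ofReal ((((2 * n - 5) * 2 ^ (n - 3) * (n - 3).factorial : ℕ) : ℝ))⁻¹ * volume Kc := by
    rw [Measure.addHaar_preimage_linearMap volume hdetne Kc, hdet,
      abs_of_pos (inv_pos.2 hDpos)]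
  -- volume chain
  have hKoκ : volume Ko = volume (Qset ∩ MS) :=
    le_antisymm (measure_mono hKoQ) (le_trans (measure_mono hQKc) hKcKo)
  have hKcκ : volume Kc = volume (Qset ∩ MS) :=
    le_antisymm (le_trans hKcKo (measure_mono hKoQ)) (measure_mono hQKc)
  have hEMSvol : volume (Eset ∩ MS)
      = ENNReal.ofReal ((((2 * n - 5) * 2 ^ (n - 3) * (n - 3).factorial : ℕ) : ℝ))⁻¹
        * volume (Qset ∩ MS) := by
    refine le_antisymm ?_ ?_
    · calc volume (Eset ∩ MS) ≤ volume (Ψ ⁻¹' Kc) := measure_mono hsub2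
        _ = _ := by rw [hpreKc, hKcκ]
    · calc ENNReal.ofReal ((((2 * n - 5) * 2 ^ (n - 3) * (n - 3).factorial : ℕ) : ℝ))⁻¹
          * volume (Qset ∩ MS) = volume (Ψ ⁻¹' Ko) := by rw [hpreKo, hKoκ]
        _ ≤ volume (Eset ∩ MS) := measure_mono hsub1
  -- conclusion
  rw [volE, hEMSvol]
  calc (n.factorial : ℝ≥0∞) * (ENNReal.ofReal ((((2 * n - 5) * 2 ^ (n - 3) * (n - 3).factorial : ℕ) : ℝ))⁻¹
        * volume (Qset ∩ MS))
      = ENNReal.ofReal ((((2 * n - 5) * 2 ^ (n - 3) * (n - 3).factorial : ℕ) : ℝ))⁻¹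
        * ((n.factorial : ℝ≥0∞) * volume (Qset ∩ MS)) := by ring
    _ = ENNReal.ofReal ((((2 * n - 5) * 2 ^ (n - 3) * (n - 3).factorial : ℕ) : ℝ))⁻¹ := by
        rw [← volQ, hQ1, mul_one]
    _ = 1 / (((2 * n - 5) * 2 ^ (n - 3) * (n - 3).factorial : ℕ) : ℝ≥0∞) := by
        rw [ENNReal.ofReal_inv_of_pos hDpos, ENNReal.ofReal_natCast, one_div]
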